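/- A permutation avoids both 132 and 213 if and only if it is reverse layered, i.e., expressible as a skew sum ι₁ ⊖ ι₂ ⊖ ⋯ ⊖ ι_m of increasing permutations ι₁,...,ι_m. -/

import Mathlib

/-- `u` and `v` have the same length and are order isomorphic (same relative order of entries). -/
def OrderIsoList (u v : List ℕ) : Prop :=
  u.length = v.length ∧ ∀ i j, i < u.length → j < u.length →
    (u.getD i 0 < u.getD j 0 ↔ v.getD i 0 < v.getD j 0)

/-- `p` contains the pattern `q`: some subsequence of `p` is order isomorphic to `q`. -/
def ContainsPat (p q : List ℕ) : Prop := ∃ s : List ℕ, s.Sublist p ∧ OrderIsoList s q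

def AvoidsPat (p q : List ℕ) : Prop := ¬ ContainsPat p q

/-- `p` is a permutation of the values `1, …, p.length`. -/
def IsPermList (p : List ℕ) : Prop := p.Perm (List.range' 1 p.length)

/-- Skew sum of permutations (in one-line list form). -/
def skewList (p q : List ℕ) : List ℕ := p.map (· + q.length) ++ q

/-- The reverse layered permutation with layer sizes `ks`:
the skew sum of increasing permutations of those lengths. -/
def revLayeredOf : List ℕ → List ℕ
  | [] => []
  | k :: ks => skewList (List.range' 1 k) (revLayeredOf ks)

lemma pair_sublist {l : List ℕ} {i j : ℕ} (hij : i < j) (hj : j < l.length) :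
    [l[i]'(by omega), l[j]].Sublist <| l := by
  have hi : i < l.length := by omega
  have h1 : [l[i]].Sublist (l.take (i+1)) := by
    rw [List.singleton_sublist]
    have : (l.take (i+1))[i]'(by simp; omega) = l[i] := List.getElem_take ..
    exact this ▸ List.getElem_mem _
  have h2 : [l[j]].Sublist <| l.drop (i+1) := by
    rw [List.singleton_sublist]
    have hj' : j - (i+1) < (l.drop (i+1)).length := by simp; omega
    have e : l[j] = (l.drop (i+1))[j - (i+1)] := by
      rw [List.getElem_drop]; congr 1; omega
    rw [e]; exact List.getElem_mem _
  have := List.Sublist.append h1 h2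
  simpa using this

lemma triple_sublist {l : List ℕ} {i j k : ℕ} (hij : i < j) (hjk : j < k) (hk : k < l.length) :
    [l[i]'(by omega), l[j]'(by omega), l[k]].Sublist <| l := by
  have hi : i < l.length := by omega
  have h1 : [l[i]].Sublist (l.take (i+1)) := by
    rw [List.singleton_sublist]
    have : (l.take (i+1))[i]'(by simp; omega) = l[i] := List.getElem_take ..
    exact this ▸ List.getElem_mem _
  have hjd : j - (i+1) < (l.drop (i+1)).length := by simp; omega
  have hkd : k - (i+1) < (l.drop (i+1)).length := by simp; omega
  have h2 : [(l.drop (i+1))[j - (i+1)], (l.drop (i+1))[k - (i+1)]].Sublist <| l.drop (i+1) :=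
    pair_sublist (by omega) hkd
  have ej : (l.drop (i+1))[j - (i+1)] = l[j] := by
    rw [List.getElem_drop]; congr 1; omega
  have ek : (l.drop (i+1))[k - (i+1)] = l[k] := by
    rw [List.getElem_drop]; congr 1; omega
  rw [ej, ek] at h2
  have := List.Sublist.append h1 h2
  simpa using this


lemma iso132 {a b c : ℕ} (h1 : a < c) (h2 : c < b) : OrderIsoList [a,b,c] [1,3,2] := by
  refine ⟨rfl, fun i j hi hj => ?_⟩
  simp only [List.length_cons, List.length_nil] at hi hj
  interval_cases i <;> interval_cases j <;> simp [List.getD] <;> omega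

lemma iso213 {a b c : ℕ} (h1 : b < a) (h2 : a < c) : OrderIsoList [a,b,c] [2,1,3] := by
  refine ⟨rfl, fun i j hi hj => ?_⟩
  simp only [List.length_cons, List.length_nil] at hi hj
  interval_cases i <;> interval_cases j <;> simp [List.getD] <;> omega

lemma iso132_elim {s : List ℕ} (h : OrderIsoList s [1,3,2]) :
    ∃ a b c, s = [a,b,c] ∧ a < c ∧ c < b := by
  obtain ⟨hlen, hiso⟩ := h
  match s, hlen with
  | [a,b,c], _ =>
    refine ⟨a, b, c, rfl, ?_, ?_⟩
    · have := hiso 0 2 (by simp) (by simp); simp [List.getD] at this; omega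
    · have := hiso 2 1 (by simp) (by simp); simp [List.getD] at this
      have h2 := hiso 1 2 (by simp) (by simp); simp [List.getD] at h2
      omega

lemma iso213_elim {s : List ℕ} (h : OrderIsoList s [2,1,3]) :
    ∃ a b c, s = [a,b,c] ∧ b < a ∧ a < c := by
  obtain ⟨hlen, hiso⟩ := h
  match s, hlen with
  | [a,b,c], _ =>
    refine ⟨a, b, c, rfl, ?_, ?_⟩
    · have := hiso 1 0 (by simp) (by simp); simp [List.getD] at this; omega
    · have := hiso 0 2 (by simp) (by simp); simp [List.getD] at this; omega


lemma revLayered_bound : ∀ ks, ∀ x ∈ revLayeredOf ks, x ≤ (revLayeredOf ks).length := by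
  intro ks
  induction ks with
  | nil => simp [revLayeredOf]
  | cons k ks ih =>
    intro x hx
    simp only [revLayeredOf, skewList, List.mem_append, List.mem_map] at hx
    have hlen : (revLayeredOf (k :: ks)).length = k + (revLayeredOf ks).length := by
      simp [revLayeredOf, skewList]
    rw [hlen]
    rcases hx with ⟨y, hy, rfl⟩ | hx
    · have := List.mem_range'.mp hy
      omega
    · have := ih x hx; omega

lemma sorted_of_sublist_shifted {s : List ℕ} {k m : ℕ}
    (h : s.Sublist ((List.range' 1 k).map (· + m))) :
    s.Pairwise (· < ·) ∧ ∀ x ∈ s, m < x := by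
  constructor
  · refine List.Pairwise.sublist h ?_
    exact List.Pairwise.map _ (fun a b hab => by omega) (List.pairwise_lt_range' (s := 1) (n := k))
  · intro x hx
    have := h.mem hx
    simp only [List.mem_map, List.mem_range'] at this
    obtain ⟨y, hy, rfl⟩ := this
    omega

lemma revLayered_avoids (ks : List ℕ) :
    AvoidsPat (revLayeredOf ks) [1,3,2] ∧ AvoidsPat (revLayeredOf ks) [2,1,3] := by
  induction ks with
  | nil =>
    constructor <;> rintro ⟨s, hs, hiso⟩ <;>
      [obtain ⟨a,b,c,rfl,-,-⟩ := iso132_elim hiso; obtain ⟨a,b,c,rfl,-,-⟩ := iso213_elim hiso] <;>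
      simp [revLayeredOf] at hs
  | cons k ks ih =>
    have hsplit : ∀ s : List ℕ, s.Sublist (revLayeredOf (k :: ks)) →
        ∃ s1 s2, s = s1 ++ s2 ∧ s1.Sublist ((List.range' 1 k).map (· + (revLayeredOf ks).length))
          ∧ s2.Sublist (revLayeredOf ks) := by
      intro s hs
      simp only [revLayeredOf, skewList] at hs
      exact List.sublist_append_iff.mp hs
    constructor
    · rintro ⟨s, hs, hiso⟩
      obtain ⟨a, b, c, rfl, hac, hcb⟩ := iso132_elim hiso
      obtain ⟨s1, s2, heq, h1, h2⟩ := hsplit _ hs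
      obtain ⟨hsort, hbig⟩ := sorted_of_sublist_shifted h1
      have hsmall : ∀ x ∈ s2, x ≤ (revLayeredOf ks).length := fun x hx =>
        revLayered_bound ks x (h2.mem hx)
      match s1, s2, heq with
      | [], _, rfl => exact ih.1 ⟨_, h2, hiso⟩
      | [a], s2, heq =>
        simp at heq
        obtain ⟨rfl, rfl⟩ := heq
        have := hbig a (by simp)
        have := hsmall c (by simp)
        omega
      | [a,b], s2, heq =>
        simp at heq
        obtain ⟨rfl, rfl, rfl⟩ := heq
        have := hbig a (by simp)
        have := hsmall c (by simp)
        omega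
      | [a,b,c'], s2, heq =>
        have hnil : s2 = [] := by
          have h' := congrArg List.length heq
          simp only [List.length_append, List.length_cons, List.length_nil] at h'
          exact List.eq_nil_of_length_eq_zero (by omega)
        subst hnil
        simp at heq
        obtain ⟨rfl, rfl, rfl⟩ := heq
        simp [List.pairwise_cons] at hsort
        omega
    · rintro ⟨s, hs, hiso⟩
      obtain ⟨a, b, c, rfl, hba, hac⟩ := iso213_elim hiso
      obtain ⟨s1, s2, heq, h1, h2⟩ := hsplit _ hs
      obtain ⟨hsort, hbig⟩ := sorted_of_sublist_shifted h1
      have hsmall : ∀ x ∈ s2, x ≤ (revLayeredOf ks).length := fun x hx =>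
        revLayered_bound ks x (h2.mem hx)
      match s1, s2, heq with
      | [], _, rfl => exact ih.2 ⟨_, h2, hiso⟩
      | [a], s2, heq =>
        simp at heq
        obtain ⟨rfl, rfl⟩ := heq
        have := hbig a (by simp)
        have := hsmall c (by simp)
        omega
      | [a,b], s2, heq =>
        simp at heq
        obtain ⟨rfl, rfl, rfl⟩ := heq
        have := hbig a (by simp)
        have := hsmall c (by simp)
        omega
      | [a,b,c'], s2, heq =>
        have hnil : s2 = [] := by
          have h' := congrArg List.length heq
          simp only [List.length_append, List.length_cons, List.length_nil] at h'
          exact List.eq_nil_of_length_eq_zero (by omega)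
        subst hnil
        simp at heq
        obtain ⟨rfl, rfl, rfl⟩ := heq
        simp [List.pairwise_cons] at hsort
        omega

lemma contains_mono {p q pat : List ℕ} (h : q.Sublist p) (hc : ContainsPat q pat) :
    ContainsPat p pat := by
  obtain ⟨s, hs, hiso⟩ := hc
  exact ⟨s, hs.trans h, hiso⟩

lemma forward_aux : ∀ n (p : List ℕ), p.length ≤ n → IsPermList p →
    AvoidsPat p [1,3,2] → AvoidsPat p [2,1,3] →
    ∃ ks : List ℕ, (∀ k ∈ ks, 0 < k) ∧ p = revLayeredOf ks := by
  intro n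
  induction n with
  | zero =>
    intro p hlen _ _ _
    have : p = [] := List.eq_nil_of_length_eq_zero (by omega)
    exact ⟨[], by simp, by simp [this, revLayeredOf]⟩
  | succ n ih =>
    intro p hlen hp ha1 ha2
    rcases Nat.eq_zero_or_pos p.length with h0 | hpos
    · have : p = [] := List.eq_nil_of_length_eq_zero h0
      exact ⟨[], by simp, by simp [this, revLayeredOf]⟩
    set n' := p.length with hn'
    have hp' : p.Perm (List.range' 1 p.length) := hp
    have hnd : p.Nodup := hp'.nodup_iff.mpr (List.nodup_range' ..)
    have hmem : ∀ x, x ∈ p ↔ (1 ≤ x ∧ x ≤ n') := by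
      intro x
      rw [hp'.mem_iff, List.mem_range'_1]
      omega
    have h0 : 0 < n' := hpos
    set v := p[0]'h0 with hv
    have hv1 : 1 ≤ v ∧ v ≤ n' := (hmem v).mp (List.getElem_mem _)
    -- key claim
    have key : ∀ t, ∀ ht : t ≤ n' - v, p[t]'(by omega) = v + t := by
      intro t
      induction t using Nat.strong_induction_on with
      | _ t ih2 =>
        intro ht
        rcases Nat.eq_zero_or_pos t with rfl | htpos
        · simp [hv]
        · -- value v + t is somewhere
          have hvt : v + t ∈ p := (hmem _).mpr ⟨by omega, by omega⟩
          obtain ⟨m, hm, hme⟩ := List.mem_iff_getElem.mp hvt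
          have hmt : t ≤ m := by
            by_contra hc
            push_neg at hc
            have := ih2 m hc (by omega)
            omega
          rcases Nat.eq_or_lt_of_le hmt with rfl | hmt'
          · exact hme
          · exfalso
            have htn : t < n' := by omega
            set u := p[t]'htn with hu
            have hub : 1 ≤ u ∧ u ≤ n' := (hmem u).mp (List.getElem_mem _)
            have hune : u ≠ v + t := by
              intro he
              have : t = m := hnd.getElem_inj_iff.mp (by omega)
              omega
            have hunotin : ∀ t' < t, u ≠ v + t' := by
              intro t' ht' he
              have het' : p[t']'(by omega) = v + t' := ih2 t' ht' (by omega)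
              have : t = t' := hnd.getElem_inj_iff.mp (by omega)
              omega
            have h00 : p[0]'(by omega) = v := rfl
            rcases lt_or_ge u v with hlt | hge
            · -- pattern 213 : [v, u, v+t]
              refine ha2 ⟨[v, u, v+t], ?_, iso213 hlt (by omega)⟩
              have := triple_sublist (l := p) htpos hmt' hm
              rwa [h00, ← hu, hme] at this
            · -- u ≥ v; u ∉ [v, v+t] so u > v + t
              have hgt : v + t < u := by
                rcases Nat.lt_or_ge u (v + t) with h' | h'
                · exfalso
                  exact hunotin (u - v) (by omega) (by omega)
                · omega
              refine ha1 ⟨[v, u, v+t], ?_, iso132 (by omega) hgt⟩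
              have := triple_sublist (l := p) htpos hmt' hm
              rwa [h00, ← hu, hme] at this
    -- decompose p
    set k := n' + 1 - v with hk
    have hkn : k ≤ n' := by omega
    have htake : p.take k = List.range' v k := by
      apply List.ext_getElem
      · simp [List.length_range']; omega
      · intro t h1 h2
        have htk : t < k := by simpa [List.length_range'] using h2
        rw [List.getElem_take, List.getElem_range', one_mul]
        exact key t (by omega)
    set q := p.drop k with hq
    have hqlen : q.length = v - 1 := by simp [hq]; omega
    have hsplit : p = List.range' v k ++ q := by
      rw [← htake, hq, List.take_append_drop]
    have hqperm : q.Perm (List.range' 1 (v - 1)) := by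
      have h1 : (List.range' v k ++ q).Perm (List.range' 1 (v-1) ++ List.range' v k) := by
        rw [← hsplit]
        have : List.range' 1 (v-1) ++ List.range' v k = List.range' 1 n' := by
          have := List.range'_append (s := 1) (m := v-1) (n := k) (step := 1)
          simp only [one_mul] at this
          rw [show 1 + (v-1) = v by omega] at this
          rw [this, show v - 1 + k = n' by omega]
        rw [this]
        exact hp
      have h2 := h1.trans List.perm_append_comm
      exact (List.perm_append_left_iff _).mp h2
    have hqp : IsPermList q := by
      show q.Perm (List.range' 1 q.length)
      rw [hqlen]; exact hqperm
    have hqsub : q.Sublist p := List.drop_sublist ..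
    obtain ⟨ks', hpos', hqeq⟩ := ih q (by omega)
      hqp (fun hc => ha1 (contains_mono hqsub hc)) (fun hc => ha2 (contains_mono hqsub hc))
    refine ⟨k :: ks', ?_, ?_⟩
    · intro x hx
      rcases List.mem_cons.mp hx with rfl | hx
      · omega
      · exact hpos' x hx
    · show p = skewList (List.range' 1 k) (revLayeredOf ks')
      rw [← hqeq]
      show p = (List.range' 1 k).map (· + q.length) ++ q
      rw [hqlen, hsplit]
      congr 1
      have := List.map_add_range' (a := v-1) 1 k 1
      rw [show v - 1 + 1 = v by omega] at this
      rw [← this]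
      apply List.map_congr_left
      intro x _
      omega

theorem stmt7 (p : List ℕ) (hp : IsPermList p) :
    (AvoidsPat p [1, 3, 2] ∧ AvoidsPat p [2, 1, 3]) ↔
      ∃ ks : List ℕ, (∀ k ∈ ks, 0 < k) ∧ p = revLayeredOf ks := by
  constructor
  · rintro ⟨h1, h2⟩
    exact forward_aux p.length p le_rfl hp h1 h2
  · rintro ⟨ks, -, rfl⟩
    exact revLayered_avoids ks
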